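/- arXiv:2403.06246 — 8 statements merged into one kernel-verified Lean document; each statement's English description precedes it below -/
import Mathlib

section
/- Let p ≥ 1 be an integer, q ∈ [0,1), ζ > 0, c > 0, C̄ ≥ 2c and S ≥ 0. Let (σ_{ij})_{1≤i,j≤p} and (σ̌_{ij})_{1≤i,j≤p} be real arrays such that |σ̌_{ij} − σ_{ij}| ≤ c ζ for all i, j, and such that (σ_{ij}) is (q,S)-row-sparse. Let ρ be a real number with 2cζ ≤ ρ ≤ C̄ ζ and let s_ρ be a shrinkage function with tuning parameter ρ. Then max_{1≤i≤p} ∑_{j=1}^p |s_ρ(σ̌_{ij}) − σ_{ij}| ≤ ( (C̄ + c) c^{−q} + (C̄ + c)^{1−q} ) · S · ζ^{1−q}. -/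
/-- `s` is a shrinkage function with tuning parameter `ρ`:
(i) `|s u| ≤ |u|`, (ii) `s u = 0` whenever `|u| ≤ ρ`, (iii) `|s u - u| ≤ ρ`. -/
def IsShrinkage (ρ : ℝ) (s : ℝ → ℝ) : Prop :=
  (∀ u : ℝ, |s u| ≤ |u|) ∧ (∀ u : ℝ, |u| ≤ ρ → s u = 0) ∧ (∀ u : ℝ, |s u - u| ≤ ρ)

/-- A `p × p` real array is `(q, S)`-row-sparse if every row satisfies
`∑ j |σ i j| ^ q ≤ S` (real power, with the convention `0 ^ 0 = 1`). -/
def RowSparse {p : ℕ} (q S : ℝ) (σ : Fin p → Fin p → ℝ) : Prop :=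
  ∀ i : Fin p, ∑ j : Fin p, |σ i j| ^ q ≤ S

theorem shrinkage_row_bound
    (p : ℕ) (hp : 1 ≤ p) (q : ℝ) (hq0 : 0 ≤ q) (hq1 : q < 1)
    (ζ c Cbar S : ℝ) (hζ : 0 < ζ) (hc : 0 < c) (hCbar : 2 * c ≤ Cbar) (hS : 0 ≤ S)
    (σ σcheck : Fin p → Fin p → ℝ)
    (hclose : ∀ i j, |σcheck i j - σ i j| ≤ c * ζ)
    (hsparse : RowSparse q S σ)
    (ρ : ℝ) (hρ1 : 2 * c * ζ ≤ ρ) (hρ2 : ρ ≤ Cbar * ζ)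
    (s : ℝ → ℝ) (hs : IsShrinkage ρ s) :
    ∀ i : Fin p, ∑ j : Fin p, |s (σcheck i j) - σ i j| ≤
      ((Cbar + c) * c ^ (-q) + (Cbar + c) ^ (1 - q)) * S * ζ ^ (1 - q) := by
  intro i
  obtain ⟨hs1, hs2, hs3⟩ := hs
  have hCc : (0:ℝ) < Cbar + c := by nlinarith
  have h1q : (0:ℝ) ≤ 1 - q := by linarith
  set K : ℝ := (Cbar + c) * c ^ (-q) + (Cbar + c) ^ (1 - q) with hK
  have hK1 : 0 ≤ (Cbar + c) * c ^ (-q) :=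
    le_of_lt (mul_pos hCc (Real.rpow_pos_of_pos hc _))
  have hK2 : 0 < (Cbar + c) ^ (1 - q) := Real.rpow_pos_of_pos hCc _
  have key : ∀ j, |s (σcheck i j) - σ i j| ≤ K * ζ ^ (1 - q) * |σ i j| ^ q := by
    intro j
    by_cases hsm : |σ i j| ≤ c * ζ
    · -- small entry: shrinkage output is 0
      have hch : |σcheck i j| ≤ ρ := by
        have : |σcheck i j| ≤ |σcheck i j - σ i j| + |σ i j| := by
          have := abs_add_le (σcheck i j - σ i j) (σ i j)
          simpa using this
        linarith [hclose i j]
      rw [hs2 _ hch, zero_sub, abs_neg]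
      -- |σ i j| ≤ |σ i j|^q * (c ζ)^{1-q}
      have hb : |σ i j| ≤ |σ i j| ^ q * (c * ζ) ^ (1 - q) := by
        rcases eq_or_lt_of_le (abs_nonneg (σ i j)) with h0 | h0
        · rw [← h0]
          positivity
        · have : |σ i j| = |σ i j| ^ q * |σ i j| ^ (1 - q) := by
            rw [← Real.rpow_add h0]
            norm_num
          nth_rewrite 1 [this]
          exact mul_le_mul_of_nonneg_left
            (Real.rpow_le_rpow (abs_nonneg _) hsm h1q)
            (le_of_lt (Real.rpow_pos_of_pos h0 _))
      have hb2 : (c * ζ) ^ (1 - q) ≤ (Cbar + c) ^ (1 - q) * ζ ^ (1 - q) := by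
        rw [Real.mul_rpow hc.le hζ.le]
        exact mul_le_mul_of_nonneg_right
          (Real.rpow_le_rpow hc.le (by linarith) h1q)
          (le_of_lt (Real.rpow_pos_of_pos hζ _))
      have hσq : (0:ℝ) ≤ |σ i j| ^ q := Real.rpow_nonneg (abs_nonneg _) _
      have hζq : (0:ℝ) ≤ ζ ^ (1 - q) := le_of_lt (Real.rpow_pos_of_pos hζ _)
      calc |σ i j| ≤ |σ i j| ^ q * (c * ζ) ^ (1 - q) := hb
        _ ≤ |σ i j| ^ q * ((Cbar + c) ^ (1 - q) * ζ ^ (1 - q)) :=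
            mul_le_mul_of_nonneg_left hb2 hσq
        _ ≤ K * ζ ^ (1 - q) * |σ i j| ^ q := by
            rw [hK]; nlinarith [mul_nonneg (mul_nonneg hK1 hζq) hσq]
    · -- large entry
      push_neg at hsm
      have hterm : |s (σcheck i j) - σ i j| ≤ (Cbar + c) * ζ := by
        have h3 := hs3 (σcheck i j)
        have h4 := hclose i j
        have : |s (σcheck i j) - σ i j| ≤
            |s (σcheck i j) - σcheck i j| + |σcheck i j - σ i j| := by
          have := abs_add_le (s (σcheck i j) - σcheck i j) (σcheck i j - σ i j)
          simpa using this
        nlinarith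
      have hcq : (c * ζ) ^ q ≤ |σ i j| ^ q :=
        Real.rpow_le_rpow (by positivity) hsm.le hq0
      have hid : c ^ (-q) * ζ ^ (1 - q) * (c * ζ) ^ q = ζ := by
        rw [Real.mul_rpow hc.le hζ.le]
        rw [show c ^ (-q) * ζ ^ (1 - q) * (c ^ q * ζ ^ q)
            = (c ^ (-q) * c ^ q) * (ζ ^ (1 - q) * ζ ^ q) by ring,
          ← Real.rpow_add hc, ← Real.rpow_add hζ]
        norm_num
      have hζle : ζ ≤ c ^ (-q) * ζ ^ (1 - q) * |σ i j| ^ q := by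
        calc ζ = c ^ (-q) * ζ ^ (1 - q) * (c * ζ) ^ q := hid.symm
          _ ≤ c ^ (-q) * ζ ^ (1 - q) * |σ i j| ^ q :=
              mul_le_mul_of_nonneg_left hcq (by positivity)
      have hσq : (0:ℝ) ≤ |σ i j| ^ q := Real.rpow_nonneg (abs_nonneg _) _
      have hζq : (0:ℝ) ≤ ζ ^ (1 - q) := le_of_lt (Real.rpow_pos_of_pos hζ _)
      calc |s (σcheck i j) - σ i j| ≤ (Cbar + c) * ζ := hterm
        _ ≤ (Cbar + c) * (c ^ (-q) * ζ ^ (1 - q) * |σ i j| ^ q) :=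
            mul_le_mul_of_nonneg_left hζle hCc.le
        _ ≤ K * ζ ^ (1 - q) * |σ i j| ^ q := by
            rw [hK]; nlinarith [mul_nonneg (mul_nonneg hK2.le hζq) hσq]
  calc ∑ j : Fin p, |s (σcheck i j) - σ i j|
      ≤ ∑ j : Fin p, K * ζ ^ (1 - q) * |σ i j| ^ q :=
        Finset.sum_le_sum (fun j _ => key j)
    _ = K * ζ ^ (1 - q) * ∑ j : Fin p, |σ i j| ^ q := by
        rw [Finset.mul_sum]
    _ ≤ K * ζ ^ (1 - q) * S := by
        apply mul_le_mul_of_nonneg_left (hsparse i)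
        have hζq : (0:ℝ) ≤ ζ ^ (1 - q) := le_of_lt (Real.rpow_pos_of_pos hζ _)
        positivity
    _ = K * S * ζ ^ (1 - q) := by ring
end

section
/- Let p ≥ 1 be an integer, q ∈ [0,1), ζ > 0, c > 0, C̄ ≥ 2c and S ≥ 0. Let (σ_{ij})_{1≤i,j≤p} and (σ̌_{ij})_{1≤i,j≤p} be real arrays such that |σ̌_{ij} − σ_{ij}| ≤ c ζ for all i, j, and such that (σ_{ij}) is (q,S)-row-sparse. Let ρ be a real number with 2cζ ≤ ρ ≤ C̄ ζ and let s_ρ be a shrinkage function with tuning parameter ρ. Then max_{1≤i≤p} ∑_{j=1}^p ( |s_ρ(σ̌_{ij}) − σ̌_{ij}| + |σ̌_{ij} − σ_{ij}| ) · 1{|σ̌_{ij}| > ρ} ≤ (C̄ + c) c^{−q} · S · ζ^{1−q}. -/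
theorem shrinkage_row_bound_large_entries
    (p : ℕ) (hp : 1 ≤ p) (q : ℝ) (hq0 : 0 ≤ q) (hq1 : q < 1)
    (ζ c Cbar S : ℝ) (hζ : 0 < ζ) (hc : 0 < c) (hCbar : 2 * c ≤ Cbar) (hS : 0 ≤ S)
    (σ σcheck : Fin p → Fin p → ℝ)
    (hclose : ∀ i j, |σcheck i j - σ i j| ≤ c * ζ)
    (hsparse : RowSparse q S σ)
    (ρ : ℝ) (hρ1 : 2 * c * ζ ≤ ρ) (hρ2 : ρ ≤ Cbar * ζ)
    (s : ℝ → ℝ) (hs : IsShrinkage ρ s) :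
    ∀ i : Fin p, ∑ j : Fin p,
        (if ρ < |σcheck i j| then |s (σcheck i j) - σcheck i j| + |σcheck i j - σ i j| else 0) ≤
      (Cbar + c) * c ^ (-q) * S * ζ ^ (1 - q) := by
  intro i
  have hcζ : (0:ℝ) < c * ζ := mul_pos hc hζ
  set K : ℝ := (Cbar + c) * ζ * (c * ζ) ^ (-q) with hK
  have hKnn : 0 ≤ K := by
    apply mul_nonneg (mul_nonneg (by nlinarith) hζ.le) (Real.rpow_nonneg hcζ.le _)
  have hterm : ∀ j : Fin p,
      (if ρ < |σcheck i j| then |s (σcheck i j) - σcheck i j| + |σcheck i j - σ i j| else 0)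
        ≤ K * |σ i j| ^ q := by
    intro j
    split_ifs with h
    · -- large entry
      have h1 : |s (σcheck i j) - σcheck i j| + |σcheck i j - σ i j| ≤ (Cbar + c) * ζ := by
        have := hs.2.2 (σcheck i j)
        have := hclose i j
        nlinarith
      have hσ : c * ζ ≤ |σ i j| := by
        have h2 : |σcheck i j| - |σ i j| ≤ |σcheck i j - σ i j| := abs_sub_abs_le_abs_sub _ _
        have := hclose i j
        nlinarith
      have h3 : (c * ζ) ^ q ≤ |σ i j| ^ q := Real.rpow_le_rpow hcζ.le hσ hq0
      have h4 : (1:ℝ) ≤ (c * ζ) ^ (-q) * |σ i j| ^ q := by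
        have h5 : (c * ζ) ^ (-q) * (c * ζ) ^ q = 1 := by
          rw [← Real.rpow_add hcζ]; simp
        calc (1:ℝ) = (c * ζ) ^ (-q) * (c * ζ) ^ q := h5.symm
          _ ≤ (c * ζ) ^ (-q) * |σ i j| ^ q :=
            mul_le_mul_of_nonneg_left h3 (Real.rpow_nonneg hcζ.le _)
      calc |s (σcheck i j) - σcheck i j| + |σcheck i j - σ i j|
          ≤ (Cbar + c) * ζ := h1
        _ ≤ (Cbar + c) * ζ * ((c * ζ) ^ (-q) * |σ i j| ^ q) := by
            nlinarith [mul_nonneg (by nlinarith : (0:ℝ) ≤ Cbar + c) hζ.le]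
        _ = K * |σ i j| ^ q := by rw [hK]; ring
    · exact mul_nonneg hKnn (Real.rpow_nonneg (abs_nonneg _) _)
  calc ∑ j : Fin p,
        (if ρ < |σcheck i j| then |s (σcheck i j) - σcheck i j| + |σcheck i j - σ i j| else 0)
      ≤ ∑ j : Fin p, K * |σ i j| ^ q := Finset.sum_le_sum fun j _ => hterm j
    _ = K * ∑ j : Fin p, |σ i j| ^ q := by rw [Finset.mul_sum]
    _ ≤ K * S := mul_le_mul_of_nonneg_left (hsparse i) hKnn
    _ = (Cbar + c) * c ^ (-q) * S * ζ ^ (1 - q) := by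
        rw [hK, Real.mul_rpow hc.le hζ.le, show (1:ℝ) - q = 1 + (-q) by ring,
          Real.rpow_add hζ, Real.rpow_one]
        ring
end

section
/- Let p ≥ 1 be an integer, q ∈ [0,1), ζ > 0, c > 0, C̄ > 0 and S ≥ 0. Let (σ_{ij})_{1≤i,j≤p} and (σ̌_{ij})_{1≤i,j≤p} be real arrays such that |σ̌_{ij} − σ_{ij}| ≤ c ζ for all i, j, and such that (σ_{ij}) is (q,S)-row-sparse. Let ρ be a real number with 0 < ρ ≤ C̄ ζ. Then max_{1≤i≤p} ∑_{j=1}^p |σ_{ij}| · 1{|σ̌_{ij}| ≤ ρ} ≤ (C̄ + c)^{1−q} · S · ζ^{1−q}. -/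
theorem sparse_row_bound_small_entries
    (p : ℕ) (hp : 1 ≤ p) (q : ℝ) (hq0 : 0 ≤ q) (hq1 : q < 1)
    (ζ c Cbar S : ℝ) (hζ : 0 < ζ) (hc : 0 < c) (hCbar : 0 < Cbar) (hS : 0 ≤ S)
    (σ σcheck : Fin p → Fin p → ℝ)
    (hclose : ∀ i j, |σcheck i j - σ i j| ≤ c * ζ)
    (hsparse : RowSparse q S σ)
    (ρ : ℝ) (hρ1 : 0 < ρ) (hρ2 : ρ ≤ Cbar * ζ) :
    ∀ i : Fin p, ∑ j : Fin p, (if |σcheck i j| ≤ ρ then |σ i j| else 0) ≤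
      (Cbar + c) ^ (1 - q) * S * ζ ^ (1 - q) := by
  intro i
  have hM : (0:ℝ) < (Cbar + c) * ζ := by positivity
  have key : ∀ j : Fin p,
      (if |σcheck i j| ≤ ρ then |σ i j| else 0) ≤ ((Cbar + c) * ζ) ^ (1 - q) * |σ i j| ^ q := by
    intro j
    have hrpow_nonneg : (0:ℝ) ≤ ((Cbar + c) * ζ) ^ (1 - q) * |σ i j| ^ q := by positivity
    by_cases h : |σcheck i j| ≤ ρ
    · simp only [h, if_true]
      by_cases hz : σ i j = 0
      · simpa [hz] using hrpow_nonneg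
      · have habs : (0:ℝ) < |σ i j| := abs_pos.mpr hz
        have hbound : |σ i j| ≤ (Cbar + c) * ζ := by
          have := abs_sub_abs_le_abs_sub (σ i j) (σcheck i j)
          have h1 : |σ i j - σcheck i j| ≤ c * ζ := by
            rw [abs_sub_comm]; exact hclose i j
          nlinarith [hclose i j, hρ2, h]
        calc |σ i j| = |σ i j| ^ (1 - q) * |σ i j| ^ q := by
              rw [← Real.rpow_add habs]; simp
          _ ≤ ((Cbar + c) * ζ) ^ (1 - q) * |σ i j| ^ q := by
              apply mul_le_mul_of_nonneg_right _ (by positivity)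
              exact Real.rpow_le_rpow (abs_nonneg _) hbound (by linarith)
    · simp only [h, if_false]; exact hrpow_nonneg
  calc ∑ j : Fin p, (if |σcheck i j| ≤ ρ then |σ i j| else 0)
      ≤ ∑ j : Fin p, ((Cbar + c) * ζ) ^ (1 - q) * |σ i j| ^ q :=
        Finset.sum_le_sum fun j _ => key j
    _ = ((Cbar + c) * ζ) ^ (1 - q) * ∑ j : Fin p, |σ i j| ^ q := by
        rw [Finset.mul_sum]
    _ ≤ ((Cbar + c) * ζ) ^ (1 - q) * S := by
        apply mul_le_mul_of_nonneg_left (hsparse i) (by positivity)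
    _ = (Cbar + c) ^ (1 - q) * S * ζ ^ (1 - q) := by
        rw [Real.mul_rpow (by positivity) (by positivity)]; ring
end

section
/- Let p ≥ 1 be an integer, q ∈ [0,1), ζ > 0, c > 0, C̄ ≥ 2c and S ≥ 0. Let (σ_{ij})_{1≤i,j≤p} and (σ̌_{ij})_{1≤i,j≤p} be real arrays that are symmetric (σ_{ij} = σ_{ji} and σ̌_{ij} = σ̌_{ji} for all i, j), such that |σ̌_{ij} − σ_{ij}| ≤ c ζ for all i, j, and such that (σ_{ij}) is (q,S)-row-sparse. Let ρ be a real number with 2cζ ≤ ρ ≤ C̄ ζ and let s_ρ be a shrinkage function with tuning parameter ρ. Then the spectral norm of the p×p matrix with (i,j)-entry s_ρ(σ̌_{ij}) − σ_{ij} is at most ( (C̄ + c) c^{−q} + (C̄ + c)^{1−q} ) · S · ζ^{1−q}. -/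
open scoped Matrix.Norms.L2Operator

lemma schur_key {p : ℕ} (M : Matrix (Fin p) (Fin p) ℝ) (R : ℝ) (hR : 0 ≤ R)
    (hsym : ∀ i j, M i j = M j i) (hrow : ∀ i, ∑ j, |M i j| ≤ R) (y : Fin p → ℝ) :
    ∑ i, (M.mulVec y i) ^ 2 ≤ R ^ 2 * ∑ j, y j ^ 2 := by
  have hcol : ∀ j, ∑ i, |M i j| ≤ R := fun j => by
    have := hrow j
    refine le_trans (le_of_eq ?_) this
    exact Finset.sum_congr rfl fun i _ => by rw [hsym i j]
  have step : ∀ i, (M.mulVec y i) ^ 2 ≤ R * ∑ j, |M i j| * y j ^ 2 := by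
    intro i
    have h1 : |M.mulVec y i| ≤ ∑ j, |M i j * y j| := by
      simpa [Matrix.mulVec, dotProduct] using
        Finset.abs_sum_le_sum_abs (fun j => M i j * y j) Finset.univ
    have h2 : (∑ j, |M i j * y j|) ^ 2 ≤ (∑ j, |M i j|) * ∑ j, |M i j| * y j ^ 2 := by
      have hcs := Finset.sum_mul_sq_le_sq_mul_sq Finset.univ
        (fun j => Real.sqrt |M i j|) (fun j => Real.sqrt |M i j| * |y j|)
      have e1 : ∀ j : Fin p, |M i j * y j| = Real.sqrt |M i j| * (Real.sqrt |M i j| * |y j|) := by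
        intro j
        have h := Real.mul_self_sqrt (abs_nonneg (M i j))
        calc |M i j * y j| = (Real.sqrt |M i j| * Real.sqrt |M i j|) * |y j| := by
              rw [h, abs_mul]
          _ = Real.sqrt |M i j| * (Real.sqrt |M i j| * |y j|) := by ring
      have e2 : ∀ j : Fin p, (Real.sqrt |M i j|) ^ 2 = |M i j| :=
        fun j => Real.sq_sqrt (abs_nonneg _)
      have e3 : ∀ j : Fin p, (Real.sqrt |M i j| * |y j|) ^ 2 = |M i j| * y j ^ 2 := by
        intro j
        rw [mul_pow, Real.sq_sqrt (abs_nonneg _), sq_abs]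
      calc (∑ j, |M i j * y j|) ^ 2
          = (∑ j, Real.sqrt |M i j| * (Real.sqrt |M i j| * |y j|)) ^ 2 := by
            congr 1; exact Finset.sum_congr rfl fun j _ => e1 j
        _ ≤ (∑ j, (Real.sqrt |M i j|) ^ 2) * ∑ j, (Real.sqrt |M i j| * |y j|) ^ 2 := hcs
        _ = (∑ j, |M i j|) * ∑ j, |M i j| * y j ^ 2 := by
            congr 1
            · exact Finset.sum_congr rfl fun j _ => e2 j
            · exact Finset.sum_congr rfl fun j _ => e3 j
    calc (M.mulVec y i) ^ 2 = |M.mulVec y i| ^ 2 := (sq_abs _).symm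
      _ ≤ (∑ j, |M i j * y j|) ^ 2 :=
          pow_le_pow_left₀ (abs_nonneg _) h1 2
      _ ≤ (∑ j, |M i j|) * ∑ j, |M i j| * y j ^ 2 := h2
      _ ≤ R * ∑ j, |M i j| * y j ^ 2 :=
          mul_le_mul_of_nonneg_right (hrow i)
            (Finset.sum_nonneg fun j _ => mul_nonneg (abs_nonneg _) (sq_nonneg _))
  calc ∑ i, (M.mulVec y i) ^ 2
      ≤ ∑ i, R * ∑ j, |M i j| * y j ^ 2 := Finset.sum_le_sum fun i _ => step i
    _ = R * ∑ j, (∑ i, |M i j|) * y j ^ 2 := by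
        rw [← Finset.mul_sum, Finset.sum_comm]
        congr 1
        exact Finset.sum_congr rfl fun j _ => by rw [Finset.sum_mul]
    _ ≤ R * ∑ j, R * y j ^ 2 := by
        refine mul_le_mul_of_nonneg_left (Finset.sum_le_sum fun j _ => ?_) hR
        exact mul_le_mul_of_nonneg_right (hcol j) (sq_nonneg _)
    _ = R ^ 2 * ∑ j, y j ^ 2 := by rw [← Finset.mul_sum]; ring

lemma schur_bound {p : ℕ} (hp : 1 ≤ p) (M : Matrix (Fin p) (Fin p) ℝ) (R : ℝ) (hR : 0 ≤ R)
    (hsym : ∀ i j, M i j = M j i) (hrow : ∀ i, ∑ j, |M i j| ≤ R) : ‖M‖ ≤ R := by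
  rw [Matrix.l2_opNorm_def]
  refine ContinuousLinearMap.opNorm_le_bound _ hR fun x => ?_
  rw [EuclideanSpace.norm_eq, EuclideanSpace.norm_eq]
  have key := schur_key M R hR hsym hrow (fun j => x j)
  rw [← Real.sqrt_sq hR, ← Real.sqrt_mul (sq_nonneg R)]
  apply Real.sqrt_le_sqrt
  simpa [Real.norm_eq_abs, sq_abs] using key

theorem shrinkage_spectral_norm_bound
    (p : ℕ) (hp : 1 ≤ p) (q : ℝ) (hq0 : 0 ≤ q) (hq1 : q < 1)
    (ζ c Cbar S : ℝ) (hζ : 0 < ζ) (hc : 0 < c) (hCbar : 2 * c ≤ Cbar) (hS : 0 ≤ S)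
    (σ σcheck : Fin p → Fin p → ℝ)
    (hσsymm : ∀ i j, σ i j = σ j i)
    (hσchecksymm : ∀ i j, σcheck i j = σcheck j i)
    (hclose : ∀ i j, |σcheck i j - σ i j| ≤ c * ζ)
    (hsparse : RowSparse q S σ)
    (ρ : ℝ) (hρ1 : 2 * c * ζ ≤ ρ) (hρ2 : ρ ≤ Cbar * ζ)
    (s : ℝ → ℝ) (hs : IsShrinkage ρ s) :
    ‖(Matrix.of fun i j : Fin p => s (σcheck i j) - σ i j)‖ ≤
      ((Cbar + c) * c ^ (-q) + (Cbar + c) ^ (1 - q)) * S * ζ ^ (1 - q) := by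
  obtain ⟨hs1, hs2, hs3⟩ := hs
  set K : ℝ := (Cbar + c) * c ^ (-q) + (Cbar + c) ^ (1 - q) with hKdef
  have hCc : 0 < Cbar + c := by linarith
  have h1q : 0 < 1 - q := by linarith
  have hζq : 0 ≤ ζ ^ (1 - q) := Real.rpow_nonneg hζ.le _
  have hK1 : 0 ≤ (Cbar + c) * c ^ (-q) :=
    mul_nonneg hCc.le (Real.rpow_nonneg hc.le _)
  have hK2 : 0 ≤ (Cbar + c) ^ (1 - q) := Real.rpow_nonneg hCc.le _
  have hK0 : 0 ≤ K := by rw [hKdef]; linarith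
  have entry : ∀ i j, |s (σcheck i j) - σ i j| ≤ K * ζ ^ (1 - q) * |σ i j| ^ q := by
    intro i j
    have hq' : (0:ℝ) ≤ |σ i j| ^ q := Real.rpow_nonneg (abs_nonneg _) _
    by_cases hcase : |σ i j| ≤ c * ζ
    · have hzero : s (σcheck i j) = 0 := by
        apply hs2
        have h0 : |σcheck i j| ≤ |σcheck i j - σ i j| + |σ i j| := by
          calc |σcheck i j| = |(σcheck i j - σ i j) + σ i j| := by ring_nf
            _ ≤ _ := abs_add_le _ _
        have := hclose i j
        calc |σcheck i j| ≤ c * ζ + c * ζ := by linarith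
          _ = 2 * c * ζ := by ring
          _ ≤ ρ := hρ1
      rw [hzero, zero_sub, abs_neg]
      have h2 : |σ i j| ≤ (c * ζ) ^ (1 - q) * |σ i j| ^ q := by
        rcases eq_or_lt_of_le (abs_nonneg (σ i j)) with h0 | h0
        · exact le_trans (le_of_eq h0.symm)
            (mul_nonneg (Real.rpow_nonneg (by positivity) _) hq')
        · have e : |σ i j| = |σ i j| ^ (1 - q) * |σ i j| ^ q := by
            rw [← Real.rpow_add h0, sub_add_cancel, Real.rpow_one]
          calc |σ i j| = |σ i j| ^ (1 - q) * |σ i j| ^ q := e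
            _ ≤ (c * ζ) ^ (1 - q) * |σ i j| ^ q :=
              mul_le_mul_of_nonneg_right
                (Real.rpow_le_rpow (abs_nonneg _) hcase h1q.le) hq'
      have h3 : (c * ζ) ^ (1 - q) ≤ (Cbar + c) ^ (1 - q) * ζ ^ (1 - q) := by
        rw [Real.mul_rpow hc.le hζ.le]
        exact mul_le_mul_of_nonneg_right
          (Real.rpow_le_rpow hc.le (by linarith) h1q.le) hζq
      calc |σ i j| ≤ (c * ζ) ^ (1 - q) * |σ i j| ^ q := h2
        _ ≤ ((Cbar + c) ^ (1 - q) * ζ ^ (1 - q)) * |σ i j| ^ q :=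
            mul_le_mul_of_nonneg_right h3 hq'
        _ ≤ K * ζ ^ (1 - q) * |σ i j| ^ q := by
            refine mul_le_mul_of_nonneg_right ?_ hq'
            refine mul_le_mul_of_nonneg_right ?_ hζq
            rw [hKdef]; linarith
    · push_neg at hcase
      have hbig : |s (σcheck i j) - σ i j| ≤ (Cbar + c) * ζ := by
        have := hs3 (σcheck i j)
        have h4 := hclose i j
        calc |s (σcheck i j) - σ i j|
            = |(s (σcheck i j) - σcheck i j) + (σcheck i j - σ i j)| := by ring_nf
          _ ≤ |s (σcheck i j) - σcheck i j| + |σcheck i j - σ i j| := abs_add_le _ _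
          _ ≤ ρ + c * ζ := add_le_add this h4
          _ ≤ Cbar * ζ + c * ζ := by linarith
          _ = (Cbar + c) * ζ := by ring
      have hcq : (0:ℝ) < c ^ q := Real.rpow_pos_of_pos hc q
      have hζqq : ζ ^ q = c ^ (-q) * (c * ζ) ^ q := by
        rw [Real.mul_rpow hc.le hζ.le, Real.rpow_neg hc.le, ← mul_assoc,
          inv_mul_cancel₀ hcq.ne', one_mul]
      have h5 : ζ ^ q ≤ c ^ (-q) * |σ i j| ^ q := by
        rw [hζqq]
        exact mul_le_mul_of_nonneg_left
          (Real.rpow_le_rpow (by positivity) hcase.le hq0)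
          (Real.rpow_nonneg hc.le _)
      have hζe : ζ = ζ ^ (1 - q) * ζ ^ q := by
        rw [← Real.rpow_add hζ, sub_add_cancel, Real.rpow_one]
      calc |s (σcheck i j) - σ i j| ≤ (Cbar + c) * ζ := hbig
        _ = (Cbar + c) * (ζ ^ (1 - q) * ζ ^ q) := by rw [← hζe]
        _ ≤ (Cbar + c) * (ζ ^ (1 - q) * (c ^ (-q) * |σ i j| ^ q)) := by
            refine mul_le_mul_of_nonneg_left ?_ hCc.le
            exact mul_le_mul_of_nonneg_left h5 hζq
        _ = ((Cbar + c) * c ^ (-q)) * ζ ^ (1 - q) * |σ i j| ^ q := by ring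
        _ ≤ K * ζ ^ (1 - q) * |σ i j| ^ q := by
            refine mul_le_mul_of_nonneg_right ?_ hq'
            refine mul_le_mul_of_nonneg_right ?_ hζq
            rw [hKdef]; linarith
  apply schur_bound hp
  · positivity
  · intro i j
    simp only [Matrix.of_apply]
    rw [hσsymm i j, hσchecksymm i j]
  · intro i
    calc ∑ j, |(Matrix.of fun i j : Fin p => s (σcheck i j) - σ i j) i j|
        ≤ ∑ j, K * ζ ^ (1 - q) * |σ i j| ^ q := by
          refine Finset.sum_le_sum fun j _ => ?_
          simpa using entry i j
      _ = K * ζ ^ (1 - q) * ∑ j, |σ i j| ^ q := by rw [Finset.mul_sum]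
      _ ≤ K * ζ ^ (1 - q) * S := by
          refine mul_le_mul_of_nonneg_left (hsparse i) ?_
          exact mul_nonneg hK0 hζq
      _ = K * S * ζ ^ (1 - q) := by ring
end

section
/- Let L : ℝ → ℝ satisfy 0 ≤ L(x) ≤ L̄ for all x and L(x) = 0 whenever |x| > 1. Let n ≥ 1 be an integer, c̄ > 0, and let t_0 < t_1 < ⋯ < t_n be real numbers with t_j − t_{j−1} ≤ c̄/n for every j. Then for every t ∈ ℝ and every b > 0, ∑_{j=1}^n (t_j − t_{j−1}) · L_b(t_j − t) ≤ L̄ · (2b + c̄/n) / b = 2 L̄ + L̄ c̄ / (n b). -/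
lemma kernel_tele (t : ℕ → ℝ) (a : ℕ) (ha : 1 ≤ a) :
    ∀ k, a ≤ k → ∑ j ∈ Finset.Icc a k, (t j - t (j - 1)) = t k - t (a - 1) := by
  intro k
  induction k with
  | zero => intro h; interval_cases a <;> simp at h ⊢
  | succ k ih =>
    intro h
    rcases Nat.lt_or_ge k a with hk | hk
    · have : a = k + 1 := le_antisymm h hk
      subst this
      simp
    · rw [Finset.sum_Icc_succ_top (le_trans hk (Nat.le_succ k)), ih hk]
      simp

/-- Kernel weight sum bound: if `0 ≤ L ≤ L̄`, `L` vanishes outside `[-1,1]`, and the grid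
`t_0 < t_1 < ⋯ < t_n` has mesh at most `c̄ / n`, then for every point `x` and bandwidth `b > 0`,
`∑_{j=1}^n (t_j - t_{j-1}) L_b(t_j - x) ≤ L̄ (2b + c̄/n) / b`, where `L_b(u) = b⁻¹ L(u/b)`. -/
theorem kernel_weight_sum_bound
    (L : ℝ → ℝ) (Lbar : ℝ)
    (hL : ∀ x : ℝ, 0 ≤ L x ∧ L x ≤ Lbar)
    (hsupp : ∀ x : ℝ, 1 < |x| → L x = 0)
    (n : ℕ) (hn : 1 ≤ n) (cbar : ℝ) (hcbar : 0 < cbar)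
    (t : ℕ → ℝ)
    (hmono : ∀ j : ℕ, 1 ≤ j → j ≤ n → t (j - 1) < t j)
    (hmesh : ∀ j : ℕ, 1 ≤ j → j ≤ n → t j - t (j - 1) ≤ cbar / n)
    (x : ℝ) (b : ℝ) (hb : 0 < b) :
    ∑ j ∈ Finset.Icc 1 n, (t j - t (j - 1)) * (b⁻¹ * L ((t j - x) / b)) ≤
      Lbar * (2 * b + cbar / n) / b := by
  have hLbar : 0 ≤ Lbar := le_trans (hL 0).1 (hL 0).2
  have hnpos : (0:ℝ) < n := by exact_mod_cast hn
  have hRHSpos : 0 < 2 * b + cbar / n := by positivity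
  set S := (Finset.Icc 1 n).filter (fun j => |t j - x| ≤ b) with hSdef
  have hsum_eq : ∑ j ∈ Finset.Icc 1 n, (t j - t (j - 1)) * (b⁻¹ * L ((t j - x) / b)) =
      ∑ j ∈ S, (t j - t (j - 1)) * (b⁻¹ * L ((t j - x) / b)) := by
    rw [hSdef]
    refine (Finset.sum_filter_of_ne ?_).symm
    intro j hj hne
    by_contra hcon
    push_neg at hcon
    have : 1 < |(t j - x) / b| := by
      rw [abs_div, abs_of_pos hb]
      rw [lt_div_iff₀ hb]
      linarith
    exact hne (by rw [hsupp _ this]; ring)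
  rw [hsum_eq]
  have hstep : ∑ j ∈ S, (t j - t (j - 1)) * (b⁻¹ * L ((t j - x) / b)) ≤
      (b⁻¹ * Lbar) * ∑ j ∈ S, (t j - t (j - 1)) := by
    rw [Finset.mul_sum]
    refine Finset.sum_le_sum ?_
    intro j hj
    have hj' := Finset.mem_filter.mp hj
    have hj1 : 1 ≤ j := (Finset.mem_Icc.mp hj'.1).1
    have hjn : j ≤ n := (Finset.mem_Icc.mp hj'.1).2
    have hgap : 0 ≤ t j - t (j - 1) := le_of_lt (sub_pos.mpr (hmono j hj1 hjn))
    rw [mul_comm]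
    refine mul_le_mul_of_nonneg_right ?_ hgap
    gcongr
    exact (hL _).2
  have hgapsum : ∑ j ∈ S, (t j - t (j - 1)) ≤ 2 * b + cbar / n := by
    rcases S.eq_empty_or_nonempty with hE | hNE
    · rw [hE]; simpa using le_of_lt hRHSpos
    · set j0 := S.min' hNE with hj0
      set j1 := S.max' hNE with hj1
      have hj0mem := S.min'_mem hNE
      have hj1mem := S.max'_mem hNE
      have hj0' := Finset.mem_filter.mp hj0mem
      have hj1' := Finset.mem_filter.mp hj1mem
      have hj01 : 1 ≤ j0 := (Finset.mem_Icc.mp hj0'.1).1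
      have hj0n : j0 ≤ n := (Finset.mem_Icc.mp hj0'.1).2
      have hj11 : 1 ≤ j1 := (Finset.mem_Icc.mp hj1'.1).1
      have hj1n : j1 ≤ n := (Finset.mem_Icc.mp hj1'.1).2
      have hle : j0 ≤ j1 := S.min'_le j1 hj1mem
      have hsub : S ⊆ Finset.Icc j0 j1 := by
        intro j hj
        exact Finset.mem_Icc.mpr ⟨S.min'_le j hj, S.le_max' j hj⟩
      have h1 : ∑ j ∈ S, (t j - t (j - 1)) ≤ ∑ j ∈ Finset.Icc j0 j1, (t j - t (j - 1)) := by
        refine Finset.sum_le_sum_of_subset_of_nonneg hsub ?_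
        intro j hj _
        have hjm := Finset.mem_Icc.mp hj
        have h1j : 1 ≤ j := le_trans hj01 hjm.1
        have hjn : j ≤ n := le_trans hjm.2 hj1n
        exact le_of_lt (sub_pos.mpr (hmono j h1j hjn))
      rw [kernel_tele t j0 hj01 j1 hle] at h1
      have habs0 := abs_le.mp hj0'.2
      have habs1 := abs_le.mp hj1'.2
      have hmesh0 := hmesh j0 hj01 hj0n
      linarith
  calc ∑ j ∈ S, (t j - t (j - 1)) * (b⁻¹ * L ((t j - x) / b))
      ≤ (b⁻¹ * Lbar) * ∑ j ∈ S, (t j - t (j - 1)) := hstep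
    _ ≤ (b⁻¹ * Lbar) * (2 * b + cbar / n) := by
        apply mul_le_mul_of_nonneg_left hgapsum
        positivity
    _ = Lbar * (2 * b + cbar / n) / b := by
        rw [div_eq_mul_inv]
        ring
end

section
/- Let L : ℝ → ℝ be Lipschitz with constant ℓ (|L(x) − L(y)| ≤ ℓ |x − y| for all x, y) and satisfy L(x) = 0 whenever |x| > 1. Let n ≥ 1 be an integer and 0 < c̲ ≤ c̄, and let t_0 < t_1 < ⋯ < t_n be real numbers with c̲/n ≤ t_j − t_{j−1} ≤ c̄/n for every j. Then for every t ∈ ℝ and every b > 0, ∑_{j=1}^n ∫_{t_{j−1}}^{t_j} |L_b(t_j − t) − L_b(s − t)| ds ≤ ℓ c̄² / (c̲ n b) + ℓ c̄² / (n² b²). -/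
/-- Lipschitz kernel discretization bound: if `L` is `ℓ`-Lipschitz and vanishes outside
`[-1,1]`, and the grid `t_0 < t_1 < ⋯ < t_n` has gaps between `c̲/n` and `c̄/n`, then for
every point `x` and bandwidth `b > 0`,
`∑_{j=1}^n ∫_{t_{j-1}}^{t_j} |L_b(t_j - x) - L_b(s - x)| ds ≤ ℓ c̄²/(c̲ n b) + ℓ c̄²/(n² b²)`,
where `L_b(u) = b⁻¹ L(u/b)`. -/
theorem kernel_weight_riemann_error_bound
    (L : ℝ → ℝ) (ℓ : ℝ)
    (hLip : ∀ x y : ℝ, |L x - L y| ≤ ℓ * |x - y|)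
    (hsupp : ∀ x : ℝ, 1 < |x| → L x = 0)
    (n : ℕ) (hn : 1 ≤ n) (clow cbar : ℝ) (hclow : 0 < clow) (hcc : clow ≤ cbar)
    (t : ℕ → ℝ)
    (hgap_low : ∀ j : ℕ, 1 ≤ j → j ≤ n → clow / n ≤ t j - t (j - 1))
    (hgap_up : ∀ j : ℕ, 1 ≤ j → j ≤ n → t j - t (j - 1) ≤ cbar / n)
    (x : ℝ) (b : ℝ) (hb : 0 < b) :
    ∑ j ∈ Finset.Icc 1 n,
        (∫ s in (t (j - 1))..(t j), |b⁻¹ * L ((t j - x) / b) - b⁻¹ * L ((s - x) / b)|) ≤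
      ℓ * cbar ^ 2 / (clow * n * b) + ℓ * cbar ^ 2 / (n ^ 2 * b ^ 2) := by
  classical
  have hn' : (0:ℝ) < n := by exact_mod_cast hn
  have hℓ : 0 ≤ ℓ := by
    have h := hLip 0 1
    have h0 : (0:ℝ) ≤ |L 0 - L 1| := abs_nonneg _
    simp only [zero_sub, abs_neg, abs_one, mul_one] at h
    linarith
  have hcont : Continuous L := by
    have : LipschitzWith ℓ.toNNReal L := by
      apply LipschitzWith.of_dist_le_mul
      intro a c
      rw [Real.dist_eq, Real.dist_eq]
      calc |L a - L c| ≤ ℓ * |a - c| := hLip a c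
        _ = ℓ.toNNReal * |a - c| := by rw [Real.coe_toNNReal ℓ hℓ]
    exact this.continuous
  have hgap_nn : ∀ j, 1 ≤ j → j ≤ n → 0 ≤ t j - t (j-1) := fun j h1 h2 =>
    le_trans (by positivity) (hgap_low j h1 h2)
  -- per-term bound
  have hterm : ∀ j, 1 ≤ j → j ≤ n →
      (∫ s in (t (j-1))..(t j), |b⁻¹ * L ((t j - x) / b) - b⁻¹ * L ((s - x) / b)|)
        ≤ ℓ / (2*b^2) * (t j - t (j-1))^2 := by
    intro j h1 h2
    have hle : t (j-1) ≤ t j := by linarith [hgap_nn j h1 h2]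
    have hint : (∫ s in (t (j-1))..(t j), ℓ / b^2 * (t j - s))
        = ℓ / (2*b^2) * (t j - t (j-1))^2 := by
      rw [intervalIntegral.integral_const_mul,
        intervalIntegral.integral_sub intervalIntegrable_const
          intervalIntegral.intervalIntegrable_id,
        intervalIntegral.integral_const, integral_id]
      simp only [smul_eq_mul]
      field_simp
      ring
    rw [← hint]
    apply intervalIntegral.integral_mono_on hle
    · apply Continuous.intervalIntegrable
      fun_prop
    · apply Continuous.intervalIntegrable
      fun_prop
    · intro s hs
      have hstj : s ≤ t j := hs.2
      have hrw : b⁻¹ * L ((t j - x) / b) - b⁻¹ * L ((s - x) / b)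
          = b⁻¹ * (L ((t j - x) / b) - L ((s - x) / b)) := by ring
      rw [hrw, abs_mul, abs_inv, abs_of_pos hb]
      have h3 := hLip ((t j - x) / b) ((s - x) / b)
      have h4 : (t j - x) / b - (s - x) / b = (t j - s) / b := by ring
      rw [h4] at h3
      have h5 : |(t j - s) / b| = (t j - s) / b := by
        apply abs_of_nonneg
        apply div_nonneg _ hb.le
        linarith
      rw [h5] at h3
      calc b⁻¹ * |L ((t j - x) / b) - L ((s - x) / b)|
          ≤ b⁻¹ * (ℓ * ((t j - s) / b)) := by
            apply mul_le_mul_of_nonneg_left h3 (by positivity)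
        _ = ℓ / b^2 * (t j - s) := by
            rw [div_eq_mul_inv]
            ring_nf
  -- zero terms
  have hzero : ∀ j, 1 ≤ j → j ≤ n → (t j < x - b ∨ x + b < t (j-1)) →
      (∫ s in (t (j-1))..(t j), |b⁻¹ * L ((t j - x) / b) - b⁻¹ * L ((s - x) / b)|) = 0 := by
    intro j h1 h2 hcase
    have hle : t (j-1) ≤ t j := by linarith [hgap_nn j h1 h2]
    have heq : Set.EqOn (fun s => |b⁻¹ * L ((t j - x) / b) - b⁻¹ * L ((s - x) / b)|)
        (fun _ => (0:ℝ)) (Set.uIcc (t (j-1)) (t j)) := by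
      intro s hs
      rw [Set.uIcc_of_le hle] at hs
      have hout : ∀ u : ℝ, (u < x - b ∨ x + b < u) → L ((u - x) / b) = 0 := by
        intro u hu
        apply hsupp
        have : b < |u - x| := by
          rcases abs_cases (u - x) with ⟨he, _⟩ | ⟨he, _⟩ <;> rcases hu with hu | hu <;> linarith
        rw [abs_div, abs_of_pos hb, lt_div_iff₀ hb, one_mul]
        exact this
      have h1' : L ((t j - x) / b) = 0 := by
        apply hout
        rcases hcase with h | h
        · exact Or.inl h
        · exact Or.inr (lt_of_lt_of_le h (by linarith [hgap_nn j h1 h2] : t (j-1) ≤ t j))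
      have h2' : L ((s - x) / b) = 0 := by
        apply hout
        rcases hcase with h | h
        · exact Or.inl (lt_of_le_of_lt hs.2 h)
        · exact Or.inr (lt_of_lt_of_le h hs.1)
      simp [h1', h2']
    rw [intervalIntegral.integral_congr heq]
    simp
  set P : ℕ → Prop := fun j => x - b ≤ t j ∧ t (j-1) ≤ x + b with hP
  set J := (Finset.Icc 1 n).filter P with hJdef
  have hJmem : ∀ j ∈ J, 1 ≤ j ∧ j ≤ n ∧ x - b ≤ t j ∧ t (j-1) ≤ x + b := by
    intro j hj
    rw [hJdef, Finset.mem_filter, Finset.mem_Icc] at hj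
    exact ⟨hj.1.1, hj.1.2, hj.2.1, hj.2.2⟩
  have hsplit : ∑ j ∈ Finset.Icc 1 n,
      (∫ s in (t (j-1))..(t j), |b⁻¹ * L ((t j - x) / b) - b⁻¹ * L ((s - x) / b)|)
      = ∑ j ∈ J,
      (∫ s in (t (j-1))..(t j), |b⁻¹ * L ((t j - x) / b) - b⁻¹ * L ((s - x) / b)|) := by
    rw [← Finset.sum_filter_add_sum_filter_not (Finset.Icc 1 n) P]
    have hz : ∑ j ∈ (Finset.Icc 1 n).filter (fun j => ¬ P j),
        (∫ s in (t (j-1))..(t j), |b⁻¹ * L ((t j - x) / b) - b⁻¹ * L ((s - x) / b)|) = 0 := by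
      apply Finset.sum_eq_zero
      intro j hj
      rw [Finset.mem_filter, Finset.mem_Icc] at hj
      apply hzero j hj.1.1 hj.1.2
      have hj2 : ¬ (x - b ≤ t j ∧ t (j-1) ≤ x + b) := hj.2
      rcases not_and_or.mp hj2 with h | h
      · exact Or.inl (lt_of_not_ge h)
      · exact Or.inr (lt_of_not_ge h)
    rw [hz, add_zero]
  rw [hsplit]
  -- telescoping sum bound
  have htel : ∀ m k : ℕ, 1 ≤ m → m ≤ k →
      ∑ j ∈ Finset.Icc m k, (t j - t (j-1)) = t k - t (m-1) := by
    intro m k hm hmk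
    rw [← Finset.Ico_add_one_right_eq_Icc, Finset.sum_Ico_eq_sum_range]
    calc ∑ i ∈ Finset.range (k + 1 - m), (t (m + i) - t (m + i - 1))
        = ∑ i ∈ Finset.range (k + 1 - m),
            ((fun i => t (m - 1 + i)) (i+1) - (fun i => t (m - 1 + i)) i) := by
          apply Finset.sum_congr rfl
          intro i _
          simp only
          have e1 : m + i = m - 1 + (i+1) := by omega
          have e2 : m + i - 1 = m - 1 + i := by omega
          rw [e2, e1]
      _ = t (m - 1 + (k + 1 - m)) - t (m - 1 + 0) :=
          Finset.sum_range_sub (fun i => t (m - 1 + i)) _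
      _ = t k - t (m-1) := by
          congr 2 <;> omega
  have hsumJ : ∑ j ∈ J, (t j - t (j-1)) ≤ 2*b + 2*(cbar/n) := by
    rcases J.eq_empty_or_nonempty with hE | hne
    · rw [hE]
      have hcbar : (0:ℝ) < cbar := lt_of_lt_of_le hclow hcc
      simp
      positivity
    · set j0 := J.min' hne with hj0def
      set j1 := J.max' hne with hj1def
      have hj0 := hJmem j0 (J.min'_mem hne)
      have hj1 := hJmem j1 (J.max'_mem hne)
      have hj01 : j0 ≤ j1 := J.min'_le j1 (J.max'_mem hne)
      have hsub : J ⊆ Finset.Icc j0 j1 := by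
        intro j hj
        exact Finset.mem_Icc.mpr ⟨J.min'_le j hj, J.le_max' j hj⟩
      have h1 : ∑ j ∈ J, (t j - t (j-1)) ≤ ∑ j ∈ Finset.Icc j0 j1, (t j - t (j-1)) := by
        apply Finset.sum_le_sum_of_subset_of_nonneg hsub
        intro j hj _
        rw [Finset.mem_Icc] at hj
        exact hgap_nn j (le_trans hj0.1 hj.1) (le_trans hj.2 hj1.2.1)
      have h2 : ∑ j ∈ Finset.Icc j0 j1, (t j - t (j-1)) = t j1 - t (j0 - 1) :=
        htel j0 j1 hj0.1 hj01
      have hup : t j1 ≤ x + b + cbar/n := by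
        have := hgap_up j1 hj1.1 hj1.2.1
        linarith [hj1.2.2.2]
      have hlow : x - b - cbar/n ≤ t (j0 - 1) := by
        have := hgap_up j0 hj0.1 hj0.2.1
        linarith [hj0.2.2.1]
      linarith
  calc ∑ j ∈ J, (∫ s in (t (j-1))..(t j), |b⁻¹ * L ((t j - x) / b) - b⁻¹ * L ((s - x) / b)|)
      ≤ ∑ j ∈ J, ℓ * cbar / (2*n*b^2) * (t j - t (j-1)) := by
        apply Finset.sum_le_sum
        intro j hj
        obtain ⟨h1, h2, _, _⟩ := hJmem j hj
        refine le_trans (hterm j h1 h2) ?_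
        have hg1 : 0 ≤ t j - t (j-1) := hgap_nn j h1 h2
        have hg2 : t j - t (j-1) ≤ cbar / n := hgap_up j h1 h2
        have hb2 : (0:ℝ) < b^2 := by positivity
        rw [div_mul_eq_mul_div, div_mul_eq_mul_div, div_le_div_iff₀ (by positivity) (by positivity)]
        have hgn : (t j - t (j-1)) * n ≤ cbar := (le_div_iff₀ hn').mp hg2
        have hkey := mul_le_mul_of_nonneg_left hgn
          (mul_nonneg (mul_nonneg hℓ hg1) (by positivity : (0:ℝ) ≤ 2*b^2))
        nlinarith [hkey]
    _ = ℓ * cbar / (2*n*b^2) * ∑ j ∈ J, (t j - t (j-1)) := by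
        rw [Finset.mul_sum]
    _ ≤ ℓ * cbar / (2*n*b^2) * (2*b + 2*(cbar/n)) := by
        have hcbar : (0:ℝ) < cbar := lt_of_lt_of_le hclow hcc
        apply mul_le_mul_of_nonneg_left hsumJ (by positivity)
    _ = ℓ * cbar / (n*b) + ℓ * cbar^2 / (n^2 * b^2) := by
        field_simp
    _ ≤ ℓ * cbar ^ 2 / (clow * n * b) + ℓ * cbar ^ 2 / (n ^ 2 * b ^ 2) := by
        have : ℓ * cbar / (n*b) ≤ ℓ * cbar^2 / (clow * n * b) := by
          have hcbar : (0:ℝ) < cbar := lt_of_lt_of_le hclow hcc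
          rw [div_le_div_iff₀ (by positivity) (by positivity)]
          have h1 : clow * cbar ≤ cbar * cbar := mul_le_mul_of_nonneg_right hcc hcbar.le
          nlinarith [mul_le_mul_of_nonneg_left h1 (by positivity : (0:ℝ) ≤ ℓ * n * b)]
        linarith
end

section
/- Let L : ℝ → ℝ be Lipschitz with constant ℓ, satisfy L(x) = 0 whenever |x| > 1, and satisfy ∫_ℝ L(x) dx = 1. Let T > 0, let n ≥ 1 be an integer and 0 < c̲ ≤ c̄, and let 0 = t_0 < t_1 < ⋯ < t_n = T be real numbers with c̲/n ≤ t_j − t_{j−1} ≤ c̄/n for every j. Then for every b > 0 and every t with b ≤ t ≤ T − b, | ∑_{j=1}^n (t_j − t_{j−1}) · L_b(t_j − t) − 1 | ≤ ℓ c̄² / (c̲ n b) + ℓ c̄² / (n² b²). -/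
set_option maxHeartbeats 1000000

open MeasureTheory Finset

/-- Kernel weights are approximately normalized in the interior: if `L` is `ℓ`-Lipschitz,
vanishes outside `[-1,1]`, and integrates to one, and the grid `0 = t_0 < ⋯ < t_n = T`
has gaps between `c̲/n` and `c̄/n`, then for every bandwidth `b > 0` and every `τ` with
`b ≤ τ ≤ T - b`, `|∑_{j=1}^n (t_j - t_{j-1}) L_b(t_j - τ) - 1| ≤ ℓ c̄²/(c̲ n b) + ℓ c̄²/(n² b²)`,
where `L_b(u) = b⁻¹ L(u/b)`. -/
theorem kernel_weight_sum_near_one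
    (L : ℝ → ℝ) (ℓ : ℝ)
    (hLip : ∀ x y : ℝ, |L x - L y| ≤ ℓ * |x - y|)
    (hsupp : ∀ x : ℝ, 1 < |x| → L x = 0)
    (hint : ∫ x : ℝ, L x = 1)
    (T : ℝ) (hT : 0 < T)
    (n : ℕ) (hn : 1 ≤ n) (clow cbar : ℝ) (hclow : 0 < clow) (hcc : clow ≤ cbar)
    (t : ℕ → ℝ) (ht0 : t 0 = 0) (htn : t n = T)
    (hgap_low : ∀ j : ℕ, 1 ≤ j → j ≤ n → clow / n ≤ t j - t (j - 1))
    (hgap_up : ∀ j : ℕ, 1 ≤ j → j ≤ n → t j - t (j - 1) ≤ cbar / n)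
    (b : ℝ) (hb : 0 < b) (τ : ℝ) (hτ1 : b ≤ τ) (hτ2 : τ ≤ T - b) :
    |(∑ j ∈ Finset.Icc 1 n, (t j - t (j - 1)) * (b⁻¹ * L ((t j - τ) / b))) - 1| ≤
      ℓ * cbar ^ 2 / (clow * n * b) + ℓ * cbar ^ 2 / (n ^ 2 * b ^ 2) := by
  classical
  have hn0 : (0:ℝ) < n := by exact_mod_cast hn
  have hcbar : 0 < cbar := lt_of_lt_of_le hclow hcc
  -- ℓ is nonnegative
  have hl0 : 0 ≤ ℓ := by
    have h := hLip 0 1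
    have h2 : |(0:ℝ) - 1| = 1 := by norm_num
    rw [h2, mul_one] at h
    exact le_trans (abs_nonneg _) h
  -- L is continuous
  have hcont : Continuous L := by
    have hlw : LipschitzWith ℓ.toNNReal L := by
      apply LipschitzWith.of_dist_le_mul
      intro x y
      rw [Real.dist_eq, Real.dist_eq, Real.coe_toNNReal _ hl0]
      exact hLip x y
    exact hlw.continuous
  -- L vanishes on the closed complement of (-1,1)
  have hL1 : ∀ x : ℝ, 1 ≤ |x| → L x = 0 := by
    intro x hx
    have key : ∀ ε : ℝ, 0 < ε → |L x| ≤ 0 + ε := by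
      intro ε hε
      set δ : ℝ := ε / (ℓ + 1) with hδdef
      have hδ : 0 < δ := by positivity
      rcases le_abs.mp hx with h | h
      · have hy : L (x + δ) = 0 := by
          apply hsupp
          rw [abs_of_pos (by linarith)]
          linarith
        have := hLip x (x + δ)
        rw [hy, sub_zero] at this
        have h3 : |x - (x + δ)| = δ := by
          rw [show x - (x + δ) = -δ by ring, abs_neg, abs_of_pos hδ]
        rw [h3] at this
        have h4 : ℓ * δ ≤ ε := by
          rw [hδdef, mul_comm, div_mul_eq_mul_div, div_le_iff₀ (by linarith : (0:ℝ) < ℓ + 1)]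
          nlinarith
        linarith
      · have hy : L (x - δ) = 0 := by
          apply hsupp
          rw [abs_of_neg (by linarith)]
          linarith
        have := hLip x (x - δ)
        rw [hy, sub_zero] at this
        have h3 : |x - (x - δ)| = δ := by
          rw [show x - (x - δ) = δ by ring, abs_of_pos hδ]
        rw [h3] at this
        have h4 : ℓ * δ ≤ ε := by
          rw [hδdef, mul_comm, div_mul_eq_mul_div, div_le_iff₀ (by linarith : (0:ℝ) < ℓ + 1)]
          nlinarith
        linarith
    have h0 : |L x| ≤ 0 := le_of_forall_pos_le_add key
    exact abs_nonpos_iff.mp h0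
  -- the rescaled kernel
  set f : ℝ → ℝ := fun s => b⁻¹ * L ((s - τ) / b) with hfdef
  have hfc : Continuous f := by
    apply continuous_const.mul
    exact hcont.comp ((continuous_id.sub continuous_const).div_const b)
  have hfint : ∀ a c : ℝ, IntervalIntegrable f volume a c := fun a c =>
    hfc.intervalIntegrable a c
  -- f vanishes at distance ≥ b from τ
  have hfzero : ∀ s : ℝ, b ≤ |s - τ| → f s = 0 := by
    intro s hs
    have h1 : (1:ℝ) ≤ |(s - τ) / b| := by
      rw [abs_div, abs_of_pos hb, le_div_iff₀ hb, one_mul]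
      exact hs
    simp only [hfdef, hL1 _ h1, mul_zero]
  -- f vanishes outside (0, T]
  have hfzeroIoc : ∀ s : ℝ, s ∉ Set.Ioc (0:ℝ) T → f s = 0 := by
    intro s hs
    rw [Set.mem_Ioc, not_and_or, not_lt, not_le] at hs
    apply hfzero
    rcases hs with h | h
    · rw [abs_of_nonpos (by linarith)]; linarith
    · rw [abs_of_pos (by linarith)]; linarith
  -- the integral of f is 1
  have hintf : ∫ s : ℝ, f s = 1 := by
    have h1 : ∫ s : ℝ, L ((s - τ) / b) = b := by
      have h2 : ∫ s : ℝ, (fun u => L (u / b)) (s - τ) = ∫ u : ℝ, L (u / b) :=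
        integral_sub_right_eq_self (fun u => L (u / b)) τ
      have h3 : (∫ u : ℝ, L (u / b)) = |b| • ∫ x : ℝ, L x :=
        MeasureTheory.Measure.integral_comp_div L b
      rw [show (fun s : ℝ => L ((s - τ) / b)) = fun s : ℝ => (fun u => L (u / b)) (s - τ)
        from rfl] at *
      rw [h2, h3, hint, smul_eq_mul, mul_one, abs_of_pos hb]
    rw [hfdef]
    rw [MeasureTheory.integral_const_mul, h1, inv_mul_cancel₀ (ne_of_gt hb)]
  -- telescoping sums of gaps
  have htel : ∀ m M : ℕ, 1 ≤ m → m ≤ M →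
      ∑ j ∈ Finset.Icc m M, (t j - t (j - 1)) = t M - t (m - 1) := by
    intro m M hm hmM
    rw [← Finset.Ico_add_one_right_eq_Icc, Finset.sum_Ico_eq_sum_range]
    have h1 : ∀ i, t (m + i) - t (m + i - 1) = t ((m-1) + (i+1)) - t ((m-1) + i) := by
      intro i; congr 2 <;> omega
    rw [Finset.sum_congr rfl (fun i _ => h1 i), Finset.sum_range_sub (fun i => t ((m-1)+i))]
    congr 2 <;> omega
  -- partition sum of integrals equals 1
  have hIsum : ∑ j ∈ Finset.Icc 1 n, (∫ s in (t (j-1))..(t j), f s) = 1 := by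
    have h1 : ∑ j ∈ Finset.Icc 1 n, (∫ s in (t (j-1))..(t j), f s)
        = ∑ i ∈ Finset.range n, (∫ s in (t i)..(t (i+1)), f s) := by
      rw [← Finset.Ico_add_one_right_eq_Icc, Finset.sum_Ico_eq_sum_range, Nat.add_sub_cancel]
      apply Finset.sum_congr rfl
      intro i _
      have e1 : 1 + i - 1 = i := by omega
      have e2 : 1 + i = i + 1 := by omega
      rw [e1, e2]
    rw [h1, intervalIntegral.sum_integral_adjacent_intervals (fun k _ => hfint _ _)]
    rw [ht0, htn]
    rw [intervalIntegral.integral_of_le hT.le]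
    rw [MeasureTheory.setIntegral_eq_integral_of_forall_compl_eq_zero hfzeroIoc]
    exact hintf
  -- rewrite the sum minus 1 as a sum of local errors
  have hkey : (∑ j ∈ Finset.Icc 1 n, (t j - t (j - 1)) * (b⁻¹ * L ((t j - τ) / b))) - 1
      = ∑ j ∈ Finset.Icc 1 n,
          ((t j - t (j - 1)) * f (t j) - ∫ s in (t (j-1))..(t j), f s) := by
    rw [Finset.sum_sub_distrib, hIsum]
  rw [hkey]
  -- per-term bound
  have hterm : ∀ j ∈ Finset.Icc 1 n,
      |(t j - t (j - 1)) * f (t j) - ∫ s in (t (j-1))..(t j), f s|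
        ≤ (if τ - b ≤ t j ∧ t (j-1) ≤ τ + b then ℓ / (2*b^2) * (t j - t (j-1))^2 else 0) := by
    intro j hj
    rw [Finset.mem_Icc] at hj
    obtain ⟨hj1, hj2⟩ := hj
    have hΔlow := hgap_low j hj1 hj2
    have hΔup := hgap_up j hj1 hj2
    have hΔpos : 0 < t j - t (j-1) := lt_of_lt_of_le (by positivity) hΔlow
    by_cases hact : τ - b ≤ t j ∧ t (j-1) ≤ τ + b
    · rw [if_pos hact]
      set a := t (j-1)
      set c := t j
      have hac : a ≤ c := by linarith
      -- rewrite as an integral of differences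
      have heq : (c - a) * f c - ∫ s in a..c, f s = ∫ s in a..c, (f c - f s) := by
        rw [intervalIntegral.integral_sub (intervalIntegrable_const) (hfint a c),
          intervalIntegral.integral_const, smul_eq_mul]
      rw [heq]
      -- pointwise Lipschitz bound
      have hpt : ∀ s ∈ Set.Icc a c, |f c - f s| ≤ ℓ / b^2 * (c - s) := by
        intro s hs
        rw [Set.mem_Icc] at hs
        have h1 : f c - f s = b⁻¹ * (L ((c - τ)/b) - L ((s - τ)/b)) := by
          rw [hfdef]; ring
        rw [h1, abs_mul, abs_of_pos (inv_pos.mpr hb)]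
        have h2 : |L ((c - τ)/b) - L ((s - τ)/b)| ≤ ℓ * ((c - s)/b) := by
          have h3 := hLip ((c - τ)/b) ((s - τ)/b)
          have h4 : |(c - τ)/b - (s - τ)/b| = (c - s)/b := by
            rw [show (c - τ)/b - (s - τ)/b = (c - s)/b by ring]
            rw [abs_of_nonneg (div_nonneg (by linarith [hs.2]) hb.le)]
          rw [h4] at h3
          exact h3
        calc b⁻¹ * |L ((c - τ)/b) - L ((s - τ)/b)| ≤ b⁻¹ * (ℓ * ((c - s)/b)) := by
              apply mul_le_mul_of_nonneg_left h2 (inv_nonneg.mpr hb.le)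
          _ = ℓ / b^2 * (c - s) := by ring
      have hbnd : |∫ s in a..c, (f c - f s)| ≤ ∫ s in a..c, ℓ / b^2 * (c - s) := by
        calc |∫ s in a..c, (f c - f s)| ≤ ∫ s in a..c, |f c - f s| :=
              intervalIntegral.abs_integral_le_integral_abs hac
          _ ≤ ∫ s in a..c, ℓ / b^2 * (c - s) := by
              apply intervalIntegral.integral_mono_on hac
              · exact (intervalIntegrable_const.sub (hfint a c)).abs
              · exact ((intervalIntegrable_const (c := (ℓ/b^2 : ℝ))).mul_continuousOn
                  ((continuous_const.sub continuous_id).continuousOn)).mono_set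
                  (by rw [Set.uIcc_of_le hac])
              · exact hpt
      have hcomp : (∫ s in a..c, ℓ / b^2 * (c - s)) = ℓ / (2*b^2) * (c - a)^2 := by
        rw [intervalIntegral.integral_const_mul,
          intervalIntegral.integral_sub intervalIntegrable_const intervalIntegral.intervalIntegrable_id,
          intervalIntegral.integral_const, integral_id, smul_eq_mul]
        field_simp
        ring
      rw [hcomp] at hbnd
      exact hbnd
    · rw [if_neg hact]
      rw [not_and_or, not_le, not_le] at hact
      have hzero : ∀ s ∈ Set.Icc (t (j-1)) (t j), f s = 0 := by
        intro s hs
        rw [Set.mem_Icc] at hs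
        apply hfzero
        rcases hact with h | h
        · rw [abs_of_nonpos (by linarith)]; linarith
        · rw [abs_of_pos (by linarith)]; linarith
      have hI0 : (∫ s in (t (j-1))..(t j), f s) = 0 := by
        rw [intervalIntegral.integral_congr (g := fun _ => 0)
          (by rw [Set.uIcc_of_le (by linarith)]; exact hzero)]
        simp
      have hf0 : f (t j) = 0 := hzero _ (Set.mem_Icc.mpr ⟨by linarith, le_refl _⟩)
      rw [hI0, hf0]
      simp
  -- sum the per-term bounds
  have hsum1 : |∑ j ∈ Finset.Icc 1 n,
      ((t j - t (j - 1)) * f (t j) - ∫ s in (t (j-1))..(t j), f s)|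
      ≤ ∑ j ∈ Finset.Icc 1 n,
        (if τ - b ≤ t j ∧ t (j-1) ≤ τ + b then ℓ / (2*b^2) * (t j - t (j-1))^2 else 0) :=
    le_trans (Finset.abs_sum_le_sum_abs _ _) (Finset.sum_le_sum hterm)
  -- the active set
  set A : Finset ℕ := (Finset.Icc 1 n).filter (fun j => τ - b ≤ t j ∧ t (j-1) ≤ τ + b) with hAdef
  have hsum2 : ∑ j ∈ Finset.Icc 1 n,
      (if τ - b ≤ t j ∧ t (j-1) ≤ τ + b then ℓ / (2*b^2) * (t j - t (j-1))^2 else 0)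
      = ∑ j ∈ A, ℓ / (2*b^2) * (t j - t (j-1))^2 := (Finset.sum_filter _ _).symm
  -- total length of active intervals
  have hgapA : ∑ j ∈ A, (t j - t (j-1)) ≤ 2*b + 2*(cbar/n) := by
    rcases A.eq_empty_or_nonempty with hA | hA
    · rw [hA, Finset.sum_empty]
      positivity
    · set m := A.min' hA with hm
      set M := A.max' hA with hM
      have hmA : m ∈ A := A.min'_mem hA
      have hMA : M ∈ A := A.max'_mem hA
      rw [hAdef, Finset.mem_filter, Finset.mem_Icc] at hmA hMA
      obtain ⟨⟨hm1, hm2⟩, hmτ, _⟩ := hmA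
      obtain ⟨⟨hM1, hM2⟩, _, hMτ⟩ := hMA
      have hmM : m ≤ M := A.min'_le _ (A.max'_mem hA)
      have hsub : A ⊆ Finset.Icc m M := fun j hj =>
        Finset.mem_Icc.mpr ⟨A.min'_le _ hj, A.le_max' _ hj⟩
      have h1 : ∑ j ∈ A, (t j - t (j-1)) ≤ ∑ j ∈ Finset.Icc m M, (t j - t (j-1)) := by
        apply Finset.sum_le_sum_of_subset_of_nonneg hsub
        intro j hj _
        rw [Finset.mem_Icc] at hj
        have := hgap_low j (le_trans hm1 hj.1) (le_trans hj.2 hM2)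
        have : (0:ℝ) < clow / n := by positivity
        linarith [hgap_low j (le_trans hm1 hj.1) (le_trans hj.2 hM2)]
      rw [htel m M hm1 hmM] at h1
      have hMup : t M ≤ τ + b + cbar/n := by
        have := hgap_up M hM1 hM2
        linarith
      have hmlow : τ - b - cbar/n ≤ t (m-1) := by
        have := hgap_up m hm1 hm2
        linarith
      linarith
  -- combine
  have hsum3 : ∑ j ∈ A, ℓ / (2*b^2) * (t j - t (j-1))^2
      ≤ ℓ / (2*b^2) * ((cbar/n) * (2*b + 2*(cbar/n))) := by
    rw [← Finset.mul_sum]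
    apply mul_le_mul_of_nonneg_left _ (by positivity)
    calc ∑ j ∈ A, (t j - t (j-1))^2 ≤ ∑ j ∈ A, (cbar/n) * (t j - t (j-1)) := by
          apply Finset.sum_le_sum
          intro j hj
          rw [hAdef, Finset.mem_filter, Finset.mem_Icc] at hj
          obtain ⟨⟨hj1, hj2⟩, _⟩ := hj
          have h1 := hgap_low j hj1 hj2
          have h2 := hgap_up j hj1 hj2
          have h3 : (0:ℝ) < clow / n := by positivity
          nlinarith
      _ = (cbar/n) * ∑ j ∈ A, (t j - t (j-1)) := by rw [Finset.mul_sum]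
      _ ≤ (cbar/n) * (2*b + 2*(cbar/n)) :=
          mul_le_mul_of_nonneg_left hgapA (by positivity)
  -- final arithmetic
  have hfinal : ℓ / (2*b^2) * ((cbar/n) * (2*b + 2*(cbar/n)))
      ≤ ℓ * cbar ^ 2 / (clow * n * b) + ℓ * cbar ^ 2 / (n ^ 2 * b ^ 2) := by
    have h1 : ℓ / (2*b^2) * ((cbar/n) * (2*b + 2*(cbar/n)))
        = ℓ * cbar / (n * b) + ℓ * cbar^2 / (n^2 * b^2) := by
      field_simp
    have h2 : ℓ * cbar / (n * b) ≤ ℓ * cbar ^ 2 / (clow * n * b) := by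
      rw [div_le_div_iff₀ (by positivity) (by positivity)]
      nlinarith [mul_nonneg (mul_nonneg (mul_nonneg hl0 hcbar.le) hn0.le) hb.le,
        sub_nonneg.mpr hcc]
    linarith
  calc |∑ j ∈ Finset.Icc 1 n,
      ((t j - t (j - 1)) * f (t j) - ∫ s in (t (j-1))..(t j), f s)|
      ≤ ∑ j ∈ A, ℓ / (2*b^2) * (t j - t (j-1))^2 := by rw [← hsum2]; exact hsum1
    _ ≤ ℓ / (2*b^2) * ((cbar/n) * (2*b + 2*(cbar/n))) := hsum3
    _ ≤ _ := hfinal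
end

section
/- Let (Ω, 𝓕, P) be a probability space with filtration (𝓕_j)_{j∈ℕ}, let n ∈ ℕ and v > 0, and let (M_j)_{0≤j≤n} be a real-valued martingale with respect to (𝓕_j). Suppose that for every ψ > 0 the random variable exp(ψ |M_n|) is integrable and E[exp(ψ |M_n|)] ≤ exp(ψ² v / 2). Then for every λ > 0, P( max_{0≤j≤n} |M_j| ≥ λ ) ≤ exp(−λ² / (2v)). -/
open MeasureTheory
open scoped NNReal ENNReal



lemma exp_condexp_le {Ω : Type*} {m m0 : MeasurableSpace Ω} (hm : m ≤ m0)
    {μ : Measure Ω} [IsProbabilityMeasure μ] {Y : Ω → ℝ}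
    (hY : Integrable Y μ) (hexp : Integrable (fun ω => Real.exp (Y ω)) μ) :
    (fun ω => Real.exp ((μ[Y|m]) ω)) ≤ᵐ[μ] μ[fun ω => Real.exp (Y ω)|m] := by
  have hq : ∀ q : ℚ, ∀ᵐ ω ∂μ,
      Real.exp q * (1 + (μ[Y|m]) ω - q) ≤ (μ[fun ω => Real.exp (Y ω)|m]) ω := by
    intro q
    have hle : (fun ω => Real.exp q * (1 + Y ω - q)) ≤ᵐ[μ] fun ω => Real.exp (Y ω) := by
      refine ae_of_all _ fun ω => ?_
      have h := Real.add_one_le_exp (Y ω - q)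
      have h2 : Real.exp q * (1 + Y ω - q) ≤ Real.exp q * Real.exp (Y ω - q) := by
        have := Real.exp_pos (q : ℝ)
        nlinarith
      calc Real.exp q * (1 + Y ω - q) ≤ Real.exp q * Real.exp (Y ω - q) := h2
        _ = Real.exp (Y ω) := by rw [← Real.exp_add]; ring_nf
    have hint : Integrable (fun ω => Real.exp q * (1 + Y ω - q)) μ := by
      have : Integrable (fun ω => 1 + Y ω - (q : ℝ)) μ :=
        ((integrable_const (1 : ℝ)).add hY).sub (integrable_const _)
      exact this.const_mul _
    have hmono := condExp_mono (m := m) hint hexp hle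
    have heq : μ[fun ω => Real.exp q * (1 + Y ω - q)|m]
        =ᵐ[μ] fun ω => Real.exp q * (1 + (μ[Y|m]) ω - q) := by
      have h1 : (fun ω => Real.exp q * (1 + Y ω - q))
          = (Real.exp q : ℝ) • (fun ω => (1 + Y ω - q)) := by
        funext ω; simp [smul_eq_mul]
      rw [h1]
      refine (condExp_smul (Real.exp q) _ _).trans ?_
      have h2 : μ[fun ω => 1 + Y ω - (q : ℝ)|m]
          =ᵐ[μ] fun ω => 1 + (μ[Y|m]) ω - q := by
        refine (condExp_sub ((integrable_const _).add hY) (integrable_const _) m).trans ?_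
        filter_upwards [condExp_add (integrable_const (1:ℝ)) hY m] with ω ha
        simp only [Pi.sub_apply, Pi.add_apply] at *
        rw [ha, condExp_const hm (1 : ℝ), condExp_const hm ((q:ℝ) : ℝ)]
      filter_upwards [h2] with ω h2
      simp only [Pi.smul_apply, smul_eq_mul, h2]
    filter_upwards [hmono, heq] with ω h1 h2
    rw [← h2]; exact h1
  rw [← ae_all_iff] at hq
  filter_upwards [hq] with ω h
  set c := (μ[fun ω => Real.exp (Y ω)|m]) ω
  set t := (μ[Y|m]) ω
  have hclosed : IsClosed {x : ℝ | Real.exp x * (1 + t - x) ≤ c} :=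
    isClosed_le (by continuity) continuous_const
  have hsub : Set.range ((↑) : ℚ → ℝ) ⊆ {x : ℝ | Real.exp x * (1 + t - x) ≤ c} := by
    rintro _ ⟨q, rfl⟩; exact h q
  have hall : {x : ℝ | Real.exp x * (1 + t - x) ≤ c} = Set.univ := by
    have := Rat.denseRange_cast (𝕜 := ℝ)
    rw [← hclosed.closure_eq]
    exact Set.eq_univ_of_univ_subset (by
      rw [← this.closure_range]; exact closure_mono hsub)
  have ht : Real.exp t * (1 + t - t) ≤ c := by
    have : t ∈ {x : ℝ | Real.exp x * (1 + t - x) ≤ c} := hall ▸ Set.mem_univ t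
    exact this
  simpa using ht

lemma step_aux {Ω : Type*} {m : MeasurableSpace Ω} {P : Measure Ω} [IsProbabilityMeasure P]
    {ℱ : Filtration ℕ m} {M : ℕ → Ω → ℝ} (hM : Martingale M ℱ P)
    {ψ : ℝ} (hψ : 0 < ψ) {i k : ℕ} (hik : i ≤ k)
    (hk : Integrable (fun ω => Real.exp (ψ * |M k ω|)) P) :
    (fun ω => Real.exp (ψ * |M i ω|)) ≤ᵐ[P]
      P[fun ω => Real.exp (ψ * |M k ω|)|ℱ i] := by
  have hfk := hM.integrable k
  have h1 : P[M k|ℱ i] =ᵐ[P] M i := hM.condExp_ae_eq hik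
  have habs : (fun ω => |(P[M k|ℱ i]) ω|) ≤ᵐ[P] P[fun ω => (abs (M k ω))|ℱ i] := by
    have ha := condExp_mono (m := ℱ i) hfk hfk.abs
      (ae_of_all P fun x => le_abs_self (M k x))
    have hb := (condExp_neg (m := ℱ i) (μ := P) (M k)).symm.le.trans
      (condExp_mono (m := ℱ i) hfk.neg hfk.abs (ae_of_all P fun x => neg_le_abs (M k x)))
    filter_upwards [ha, hb] with ω hx hy
    simp only [Pi.neg_apply] at hy
    exact abs_le.2 ⟨by linarith, hx⟩
  have hY : Integrable (fun ω => ψ * |M k ω|) P := hfk.abs.const_mul ψ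
  have hjensen := exp_condexp_le (ℱ.le i) hY hk
  have hsmul : P[fun ω => ψ * (abs (M k ω))|ℱ i]
      =ᵐ[P] fun ω => ψ * (P[fun ω => (abs (M k ω))|ℱ i]) ω := by
    have h : (fun ω => ψ * |M k ω|) = ψ • fun ω => |M k ω| := by
      funext ω; simp [smul_eq_mul]
    rw [h]
    filter_upwards [condExp_smul (μ := P) (m := ℱ i) ψ (fun ω => abs (M k ω))] with ω hx
    simpa using hx
  filter_upwards [h1, habs, hjensen, hsmul] with ω h1 h2 h3 h4
  have : ψ * |M i ω| ≤ (P[fun ω => ψ * (abs (M k ω))|ℱ i]) ω := by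
    rw [h4]
    have : |M i ω| ≤ (P[fun ω => (abs (M k ω))|ℱ i]) ω := by rw [← h1]; exact h2
    nlinarith
  calc Real.exp (ψ * |M i ω|) ≤ Real.exp ((P[fun ω => ψ * (abs (M k ω))|ℱ i]) ω) :=
        Real.exp_le_exp.2 this
    _ ≤ _ := h3


/-- Doob-type maximal inequality from an exponential moment bound on the terminal value:
if `(M_j)_{0 ≤ j ≤ n}` is a martingale and `E[exp(ψ |M_n|)] ≤ exp(ψ² v / 2)` for every
`ψ > 0`, then `P(max_{0 ≤ j ≤ n} |M_j| ≥ λ) ≤ exp(-λ²/(2v))` for every `λ > 0`. -/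
theorem martingale_maximal_exponential_bound
    {Ω : Type*} {m : MeasurableSpace Ω} {P : Measure Ω} [IsProbabilityMeasure P]
    (ℱ : Filtration ℕ m) (n : ℕ) (v : ℝ) (hv : 0 < v)
    (M : ℕ → Ω → ℝ) (hM : Martingale M ℱ P)
    (hint : ∀ ψ : ℝ, 0 < ψ → Integrable (fun ω => Real.exp (ψ * |M n ω|)) P)
    (hmgf : ∀ ψ : ℝ, 0 < ψ →
      ∫ ω, Real.exp (ψ * |M n ω|) ∂P ≤ Real.exp (ψ ^ 2 * v / 2))
    (lam : ℝ) (hlam : 0 < lam) :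
    P {ω | ∃ j ≤ n, lam ≤ |M j ω|} ≤ ENNReal.ofReal (Real.exp (-lam ^ 2 / (2 * v))) := by
  set ψ : ℝ := lam / v with hψdef
  have hψ : 0 < ψ := div_pos hlam hv
  -- integrability of exp(ψ|M i|) for i ≤ n
  have hinti : ∀ i, i ≤ n → Integrable (fun ω => Real.exp (ψ * |M i ω|)) P := by
    intro i hi
    have hb := step_aux hM hψ hi (hint ψ hψ)
    refine (integrable_condExp (m := ℱ i)
      (f := fun ω => Real.exp (ψ * |M n ω|))).mono' ?_ ?_
    · exact ((Real.continuous_exp.comp (continuous_const.mul continuous_abs)).comp_stronglyMeasurable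
        ((hM.stronglyMeasurable i).mono (ℱ.le i))).aestronglyMeasurable
    · filter_upwards [hb] with ω h
      rw [Real.norm_eq_abs, abs_of_pos (Real.exp_pos _)]
      exact h
  set f : ℕ → Ω → ℝ := fun j ω => Real.exp (ψ * |M (min j n) ω|) with hf
  have hintf : ∀ j, Integrable (f j) P := fun j => hinti _ (min_le_right j n)
  have hadp : StronglyAdapted ℱ f := fun j =>
    (Real.continuous_exp.comp (continuous_const.mul continuous_abs)).comp_stronglyMeasurable
      ((hM.stronglyMeasurable (min j n)).mono (ℱ.mono (min_le_left j n)))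
  have hsub : Submartingale f ℱ P := by
    refine ⟨hadp, fun i j hij => ?_, hintf⟩
    by_cases hin : i ≤ n
    · have h := step_aux hM hψ (le_min hij hin) (hintf j)
      simp only [hf, min_eq_left hin]
      exact h
    · push_neg at hin
      have hni : n ≤ i := hin.le
      simp only [hf, min_eq_right hni, min_eq_right (hni.trans hij)]
      have hsm : StronglyMeasurable[ℱ i] (fun ω => Real.exp (ψ * |M n ω|)) :=
        (Real.continuous_exp.comp (continuous_const.mul continuous_abs)).comp_stronglyMeasurable
          ((hM.stronglyMeasurable n).mono (ℱ.mono hni))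
      rw [condExp_of_stronglyMeasurable (ℱ.le i) hsm (hinti n le_rfl)]
  have hnn : (0 : ℕ → Ω → ℝ) ≤ f := fun j ω => (Real.exp_pos _).le
  have hmax := maximal_ineq hsub hnn (ε := (Real.exp (ψ * lam)).toNNReal) n
  set S := {ω | ((Real.exp (ψ * lam)).toNNReal : ℝ) ≤
      (Finset.range (n + 1)).sup' Finset.nonempty_range_add_one fun k => f k ω} with hS
  have hAS : {ω | ∃ j ≤ n, lam ≤ |M j ω|} ⊆ S := by
    rintro ω ⟨j, hj, hle⟩
    have hj' : j ∈ Finset.range (n + 1) := Finset.mem_range.2 (Nat.lt_succ_of_le hj)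
    have h1 : Real.exp (ψ * lam) ≤ f j ω := by
      simp only [hf, min_eq_left hj]
      exact Real.exp_le_exp.2 (by nlinarith)
    simp only [hS, Set.mem_setOf_eq]
    refine le_trans ?_ (Finset.le_sup' _ hj')
    rw [Real.coe_toNNReal _ (Real.exp_pos _).le]
    exact h1
  have hε0 : (((Real.exp (ψ * lam)).toNNReal : ℝ≥0) : ℝ≥0∞) ≠ 0 := by
    simp [Real.toNNReal_eq_zero, (Real.exp_pos (ψ * lam)).not_ge]
  rw [← ENNReal.mul_le_mul_iff_right hε0 ENNReal.coe_ne_top]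
  calc (((Real.exp (ψ * lam)).toNNReal : ℝ≥0) : ℝ≥0∞) * P {ω | ∃ j ≤ n, lam ≤ |M j ω|}
      ≤ (((Real.exp (ψ * lam)).toNNReal : ℝ≥0) : ℝ≥0∞) * P S :=
        mul_le_mul_right (measure_mono hAS) _
    _ ≤ ENNReal.ofReal (∫ ω in S, f n ω ∂P) := hmax
    _ ≤ ENNReal.ofReal (∫ ω, f n ω ∂P) := ENNReal.ofReal_le_ofReal
        (setIntegral_le_integral (hintf n) (ae_of_all _ fun ω => (Real.exp_pos _).le))
    _ ≤ ENNReal.ofReal (Real.exp (ψ ^ 2 * v / 2)) := ENNReal.ofReal_le_ofReal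
        (by simpa [hf, min_self] using hmgf ψ hψ)
    _ = (((Real.exp (ψ * lam)).toNNReal : ℝ≥0) : ℝ≥0∞) *
        ENNReal.ofReal (Real.exp (-lam ^ 2 / (2 * v))) := by
        rw [show (((Real.exp (ψ * lam)).toNNReal : ℝ≥0) : ℝ≥0∞)
            = ENNReal.ofReal (Real.exp (ψ * lam)) from rfl,
          ← ENNReal.ofReal_mul (Real.exp_pos _).le, ← Real.exp_add]
        congr 1
        rw [Real.exp_eq_exp, hψdef]
        field_simp
        ring
end
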